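/- Let X and Y be objects of C₂(P) with decompositions X ≅ X_r ⊕ X_c and Y ≅ Y_r ⊕ Y_c, where X_r, Y_r are radical and X_c, Y_c are contractible. Then X and Y are homotopy equivalent (X ≃ Y) if and only if X_r ≅ Y_r in C₂(P). -/

import Mathlib

open CategoryTheory

universe u

noncomputable section

variable (R : Type u) [Ring R]

structure TwoCx : Type (u + 1) where
  X1 : ModuleCat.{u} R
  X0 : ModuleCat.{u} R
  fin1 : Module.Finite R X1
  proj1 : Module.Projective R X1
  fin0 : Module.Finite R X0
  proj0 : Module.Projective R X0
  d1 : X1 ⟶ X0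
  d0 : X0 ⟶ X1
  dd1 : d1 ≫ d0 = 0
  dd0 : d0 ≫ d1 = 0

variable {R}

@[ext]
structure TwoHom (X Y : TwoCx R) : Type u where
  f1 : X.X1 ⟶ Y.X1
  f0 : X.X0 ⟶ Y.X0
  comm1 : X.d1 ≫ f0 = f1 ≫ Y.d1
  comm0 : X.d0 ≫ f1 = f0 ≫ Y.d0

instance : CategoryStruct (TwoCx R) where
  Hom := TwoHom
  id X := ⟨𝟙 X.X1, 𝟙 X.X0, by simp, by simp⟩
  comp {X Y Z} f g :=
    ⟨f.f1 ≫ g.f1, f.f0 ≫ g.f0, by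
      rw [← Category.assoc, f.comm1, Category.assoc, g.comm1, ← Category.assoc], by
      rw [← Category.assoc, f.comm0, Category.assoc, g.comm0, ← Category.assoc]⟩

@[simp] theorem id_f1 (X : TwoCx R) : TwoHom.f1 (𝟙 X) = 𝟙 X.X1 := rfl
@[simp] theorem id_f0 (X : TwoCx R) : TwoHom.f0 (𝟙 X) = 𝟙 X.X0 := rfl
@[simp] theorem comp_f1 {X Y Z : TwoCx R} (f : X ⟶ Y) (g : Y ⟶ Z) :
    TwoHom.f1 (f ≫ g) = TwoHom.f1 f ≫ TwoHom.f1 g := rfl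
@[simp] theorem comp_f0 {X Y Z : TwoCx R} (f : X ⟶ Y) (g : Y ⟶ Z) :
    TwoHom.f0 (f ≫ g) = TwoHom.f0 f ≫ TwoHom.f0 g := rfl

@[ext] theorem hom_ext {X Y : TwoCx R} {f g : X ⟶ Y}
    (h1 : TwoHom.f1 f = TwoHom.f1 g) (h0 : TwoHom.f0 f = TwoHom.f0 g) : f = g :=
  TwoHom.ext h1 h0

instance : Category (TwoCx R) where
  id_comp f := by ext <;> simp
  comp_id f := by ext <;> simp
  assoc f g h := by ext <;> simp

section HomGroup

variable {X Y : TwoCx R}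

instance : Zero (X ⟶ Y) :=
  ⟨TwoHom.mk 0 0 (by simp) (by simp)⟩

@[simp] theorem zero_f1 : TwoHom.f1 (0 : X ⟶ Y) = 0 := rfl
@[simp] theorem zero_f0 : TwoHom.f0 (0 : X ⟶ Y) = 0 := rfl

instance : Add (X ⟶ Y) :=
  ⟨fun f g => TwoHom.mk (f.f1 + g.f1) (f.f0 + g.f0)
    (by rw [Preadditive.comp_add, f.comm1, g.comm1, ← Preadditive.add_comp])
    (by rw [Preadditive.comp_add, f.comm0, g.comm0, ← Preadditive.add_comp])⟩

@[simp] theorem add_f1 (f g : X ⟶ Y) :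
    TwoHom.f1 (f + g) = TwoHom.f1 f + TwoHom.f1 g := rfl
@[simp] theorem add_f0 (f g : X ⟶ Y) :
    TwoHom.f0 (f + g) = TwoHom.f0 f + TwoHom.f0 g := rfl

instance : Neg (X ⟶ Y) :=
  ⟨fun f => TwoHom.mk (-f.f1) (-f.f0)
    (by rw [Preadditive.comp_neg, f.comm1, ← Preadditive.neg_comp])
    (by rw [Preadditive.comp_neg, f.comm0, ← Preadditive.neg_comp])⟩

@[simp] theorem neg_f1 (f : X ⟶ Y) : TwoHom.f1 (-f) = -TwoHom.f1 f := rfl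
@[simp] theorem neg_f0 (f : X ⟶ Y) : TwoHom.f0 (-f) = -TwoHom.f0 f := rfl

instance : AddCommGroup (X ⟶ Y) where
  add := (· + ·)
  zero := 0
  neg := Neg.neg
  add_assoc a b c := by ext <;> simp [add_assoc]
  zero_add a := by ext <;> simp
  add_zero a := by ext <;> simp
  add_comm a b := by ext <;> simp [add_comm]
  neg_add_cancel a := by ext <;> simp
  nsmul := nsmulRec
  zsmul := zsmulRec

@[simp] theorem sub_f1 (f g : X ⟶ Y) :
    TwoHom.f1 (f - g) = TwoHom.f1 f - TwoHom.f1 g := by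
  show TwoHom.f1 (f + -g) = _
  rw [add_f1, neg_f1, sub_eq_add_neg]

@[simp] theorem sub_f0 (f g : X ⟶ Y) :
    TwoHom.f0 (f - g) = TwoHom.f0 f - TwoHom.f0 g := by
  show TwoHom.f0 (f + -g) = _
  rw [add_f0, neg_f0, sub_eq_add_neg]

end HomGroup

instance : Preadditive (TwoCx R) where
  add_comp := by intros; ext <;> simp
  comp_add := by intros; ext <;> simp

def Homotopic {X Y : TwoCx R} (f g : X ⟶ Y) : Prop :=
  ∃ (h1 : X.X1 ⟶ Y.X0) (h0 : X.X0 ⟶ Y.X1),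
    TwoHom.f1 f - TwoHom.f1 g = h1 ≫ Y.d0 + X.d1 ≫ h0 ∧
    TwoHom.f0 f - TwoHom.f0 g = h0 ≫ Y.d1 + X.d0 ≫ h1

def Contractible (X : TwoCx R) : Prop := Homotopic (𝟙 X) (0 : X ⟶ X)

def IsHtpEquiv {X Y : TwoCx R} (f : X ⟶ Y) : Prop :=
  ∃ g : Y ⟶ X, Homotopic (f ≫ g) (𝟙 X) ∧ Homotopic (g ≫ f) (𝟙 Y)

def HtpEquiv (X Y : TwoCx R) : Prop := ∃ f : X ⟶ Y, IsHtpEquiv f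

def modRad (M : ModuleCat.{u} R) : Submodule R M :=
  sInf {N : Submodule R M | IsCoatom N}

def RadicalCx (X : TwoCx R) : Prop :=
  LinearMap.range X.d1.hom ≤ modRad X.X0 ∧ LinearMap.range X.d0.hom ≤ modRad X.X1

def dsum (X Y : TwoCx R) : TwoCx R where
  X1 := ModuleCat.of R (X.X1 × Y.X1)
  X0 := ModuleCat.of R (X.X0 × Y.X0)
  fin1 := by haveI := X.fin1; haveI := Y.fin1; exact (inferInstance : Module.Finite R (X.X1 × Y.X1))
  proj1 := by haveI := X.proj1; haveI := Y.proj1; exact (inferInstance : Module.Projective R (X.X1 × Y.X1))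
  fin0 := by haveI := X.fin0; haveI := Y.fin0; exact (inferInstance : Module.Finite R (X.X0 × Y.X0))
  proj0 := by haveI := X.proj0; haveI := Y.proj0; exact (inferInstance : Module.Projective R (X.X0 × Y.X0))
  d1 := ModuleCat.ofHom (LinearMap.prodMap X.d1.hom Y.d1.hom)
  d0 := ModuleCat.ofHom (LinearMap.prodMap X.d0.hom Y.d0.hom)
  dd1 := by
    have h1 : LinearMap.comp X.d0.hom X.d1.hom = 0 := congrArg ModuleCat.Hom.hom X.dd1
    have h2 : LinearMap.comp Y.d0.hom Y.d1.hom = 0 := congrArg ModuleCat.Hom.hom Y.dd1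
    apply ModuleCat.hom_ext
    show LinearMap.comp (LinearMap.prodMap X.d0.hom Y.d0.hom) (LinearMap.prodMap X.d1.hom Y.d1.hom) = 0
    rw [LinearMap.prodMap_comp, h1, h2, LinearMap.prodMap_zero]
  dd0 := by
    have h1 : LinearMap.comp X.d1.hom X.d0.hom = 0 := congrArg ModuleCat.Hom.hom X.dd0
    have h2 : LinearMap.comp Y.d1.hom Y.d0.hom = 0 := congrArg ModuleCat.Hom.hom Y.dd0
    apply ModuleCat.hom_ext
    show LinearMap.comp (LinearMap.prodMap X.d1.hom Y.d1.hom) (LinearMap.prodMap X.d0.hom Y.d0.hom) = 0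
    rw [LinearMap.prodMap_comp, h1, h2, LinearMap.prodMap_zero]

def kP (P : ModuleCat.{u} R) (h1 : Module.Finite R P) (h2 : Module.Projective R P) : TwoCx R :=
  ⟨P, P, h1, h2, h1, h2, 𝟙 P, 0, by simp, by simp⟩

def kS (P : ModuleCat.{u} R) (h1 : Module.Finite R P) (h2 : Module.Projective R P) : TwoCx R :=
  ⟨P, P, h1, h2, h1, h2, 0, 𝟙 P, by simp, by simp⟩

def starCx (X : TwoCx R) : TwoCx R :=
  ⟨X.X0, X.X1, X.fin0, X.proj0, X.fin1, X.proj1, -X.d0, -X.d1,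
    by simp [X.dd0], by simp [X.dd1]⟩

-- ## The homotopy category
variable (R) in
def htpRel : HomRel (TwoCx R) := fun _ _ f g => Homotopic f g

abbrev KTwo (R : Type u) [Ring R] := CategoryTheory.Quotient (htpRel R)

def KFun (R : Type u) [Ring R] : TwoCx R ⥤ KTwo R := Quotient.functor _

-- ## Short exact sequences
structure SESData (Y Z X : TwoCx R) where
  a : Y ⟶ Z
  b : Z ⟶ X
  inj1 : Function.Injective (TwoHom.f1 a)
  inj0 : Function.Injective (TwoHom.f0 a)
  surj1 : Function.Surjective (TwoHom.f1 b)
  surj0 : Function.Surjective (TwoHom.f0 b)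
  exact1 : LinearMap.range (TwoHom.f1 a).hom = LinearMap.ker (TwoHom.f1 b).hom
  exact0 : LinearMap.range (TwoHom.f0 a).hom = LinearMap.ker (TwoHom.f0 b).hom

def SESEquiv {Y X Z Z' : TwoCx R} (s : SESData Y Z X) (t : SESData Y Z' X) : Prop :=
  ∃ e : Z ≅ Z', s.a ≫ e.hom = t.a ∧ e.hom ≫ t.b = s.b

/-- The two components of a morphism `X ⟶ Y^*`, with their natural types. -/
def sf1 {X Y : TwoCx R} (f : X ⟶ starCx Y) : X.X1 →ₗ[R] Y.X0 := (TwoHom.f1 f).hom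
def sf0 {X Y : TwoCx R} (f : X ⟶ starCx Y) : X.X0 →ₗ[R] Y.X1 := (TwoHom.f0 f).hom

-- ## The middle term associated to `f : X ⟶ Y^*`
def coneCx {X Y : TwoCx R} (f : X ⟶ starCx Y) : TwoCx R where
  X1 := ModuleCat.of R (X.X1 × Y.X1)
  X0 := ModuleCat.of R (X.X0 × Y.X0)
  fin1 := by haveI := X.fin1; haveI := Y.fin1; exact (inferInstance : Module.Finite R (X.X1 × Y.X1))
  proj1 := by haveI := X.proj1; haveI := Y.proj1; exact (inferInstance : Module.Projective R (X.X1 × Y.X1))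
  fin0 := by haveI := X.fin0; haveI := Y.fin0; exact (inferInstance : Module.Finite R (X.X0 × Y.X0))
  proj0 := by haveI := X.proj0; haveI := Y.proj0; exact (inferInstance : Module.Projective R (X.X0 × Y.X0))
  d1 := ModuleCat.ofHom (LinearMap.prod (X.d1.hom ∘ₗ LinearMap.fst R X.X1 Y.X1)
    (Y.d1.hom ∘ₗ LinearMap.snd R X.X1 Y.X1 - sf1 f ∘ₗ LinearMap.fst R X.X1 Y.X1))
  d0 := ModuleCat.ofHom (LinearMap.prod (X.d0.hom ∘ₗ LinearMap.fst R X.X0 Y.X0)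
    (Y.d0.hom ∘ₗ LinearMap.snd R X.X0 Y.X0 - sf0 f ∘ₗ LinearMap.fst R X.X0 Y.X0))
  dd1 := by
    refine ModuleCat.hom_ext (LinearMap.ext fun p => Prod.ext ?_ ?_)
    · show X.d0 (X.d1 p.1) = 0
      exact DFunLike.congr_fun (congrArg ModuleCat.Hom.hom X.dd1) p.1
    · show Y.d0 (Y.d1 p.2 - sf1 f p.1) - sf0 f (X.d1 p.1) = 0
      have hY : Y.d0 (Y.d1 p.2) = 0 := DFunLike.congr_fun (congrArg ModuleCat.Hom.hom Y.dd1) p.2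
      have hc : sf0 f (X.d1 p.1) = -(Y.d0 (sf1 f p.1)) := DFunLike.congr_fun (congrArg ModuleCat.Hom.hom f.comm1) p.1
      rw [map_sub, hY, hc]
      simp
  dd0 := by
    refine ModuleCat.hom_ext (LinearMap.ext fun p => Prod.ext ?_ ?_)
    · show X.d1 (X.d0 p.1) = 0
      exact DFunLike.congr_fun (congrArg ModuleCat.Hom.hom X.dd0) p.1
    · show Y.d1 (Y.d0 p.2 - sf0 f p.1) - sf1 f (X.d0 p.1) = 0
      have hY : Y.d1 (Y.d0 p.2) = 0 := DFunLike.congr_fun (congrArg ModuleCat.Hom.hom Y.dd0) p.2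
      have hc : sf1 f (X.d0 p.1) = -(Y.d1 (sf0 f p.1)) := DFunLike.congr_fun (congrArg ModuleCat.Hom.hom f.comm0) p.1
      rw [map_sub, hY, hc]
      simp

/-- The canonical inclusion `Y ⟶ Z_f`. -/
def coneIn {X Y : TwoCx R} (f : X ⟶ starCx Y) : Y ⟶ coneCx f where
  f1 := ModuleCat.ofHom (LinearMap.inr R X.X1 Y.X1)
  f0 := ModuleCat.ofHom (LinearMap.inr R X.X0 Y.X0)
  comm1 := by
    refine ModuleCat.hom_ext (LinearMap.ext fun y => Prod.ext ?_ ?_)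
    · show (0 : X.X0) = X.d1 0
      simp
    · show Y.d1 y = Y.d1 y - sf1 f 0
      simp
  comm0 := by
    refine ModuleCat.hom_ext (LinearMap.ext fun y => Prod.ext ?_ ?_)
    · show (0 : X.X1) = X.d0 0
      simp
    · show Y.d0 y = Y.d0 y - sf0 f 0
      simp

/-- The canonical projection `Z_f ⟶ X`. -/
def coneOut {X Y : TwoCx R} (f : X ⟶ starCx Y) : coneCx f ⟶ X where
  f1 := ModuleCat.ofHom (LinearMap.fst R X.X1 Y.X1)
  f0 := ModuleCat.ofHom (LinearMap.fst R X.X0 Y.X0)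
  comm1 := ModuleCat.hom_ext (LinearMap.ext fun _ => rfl)
  comm0 := ModuleCat.hom_ext (LinearMap.ext fun _ => rfl)

/-- The canonical short exact sequence `0 ⟶ Y ⟶ Z_f ⟶ X ⟶ 0`. -/
def canonSES {X Y : TwoCx R} (f : X ⟶ starCx Y) : SESData Y (coneCx f) X where
  a := coneIn f
  b := coneOut f
  inj1 := LinearMap.inr_injective
  inj0 := LinearMap.inr_injective
  surj1 := LinearMap.fst_surjective
  surj0 := LinearMap.fst_surjective
  exact1 := LinearMap.range_inr R X.X1 Y.X1
  exact0 := LinearMap.range_inr R X.X0 Y.X0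

-- ## scalar endomorphisms
def scalarMod [Algebra ℂ R] (c : ℂ) (M : ModuleCat.{u} R) : M ⟶ M :=
  ModuleCat.ofHom
  { toFun := fun m => algebraMap ℂ R c • m
    map_add' := fun x y => smul_add _ x y
    map_smul' := fun r m => by
      simp only [RingHom.id_apply, smul_smul, Algebra.commutes] }

def scalarHom [Algebra ℂ R] (c : ℂ) (X : TwoCx R) : X ⟶ X where
  f1 := scalarMod c X.X1
  f0 := scalarMod c X.X0
  comm1 := by
    refine ModuleCat.hom_ext (LinearMap.ext fun x => ?_)
    exact (map_smul X.d1.hom (algebraMap ℂ R c) x).symm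
  comm0 := by
    refine ModuleCat.hom_ext (LinearMap.ext fun x => ?_)
    exact (map_smul X.d0.hom (algebraMap ℂ R c) x).symm

end


-- ## Auxiliary lemmas for statement_5

section Aux5

variable {R : Type u} [Ring R]

lemma modRad_le_comap5 {M N : ModuleCat.{u} R} (φ : M →ₗ[R] N)
    {K : Submodule R N} (hK : IsCoatom K) : modRad M ≤ K.comap φ := by
  rcases eq_or_ne (K.comap φ) ⊤ with h | h
  · rw [h]; exact le_top
  · refine sInf_le ⟨h, fun L hL => ?_⟩
    have hmap : ¬ Submodule.map φ L ≤ K := by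
      intro hle
      exact hL.not_ge fun x hx => Submodule.mem_comap.mpr (hle ⟨x, hx, rfl⟩)
    have hsup : K ⊔ Submodule.map φ L = ⊤ := by
      refine hK.2 _ (lt_of_le_of_ne le_sup_left ?_)
      intro hEq
      exact hmap (hEq ▸ le_sup_right)
    rw [eq_top_iff]
    intro x _
    have hx : φ x ∈ K ⊔ Submodule.map φ L := hsup ▸ Submodule.mem_top
    rcases Submodule.mem_sup.mp hx with ⟨k, hk, y, hy, hxy⟩
    rcases hy with ⟨l, hl, rfl⟩
    have hsub : x - l ∈ K.comap φ := by
      have hphi : φ (x - l) = k := by rw [map_sub, ← hxy]; abel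
      simpa [Submodule.mem_comap, hphi] using hk
    have hxl : x - l ∈ L := hL.le hsub
    simpa using L.add_mem hxl hl

lemma mem_modRad_map5 {M N : ModuleCat.{u} R} (φ : M →ₗ[R] N) {x : M}
    (hx : x ∈ modRad M) : φ x ∈ modRad N := by
  refine Submodule.mem_sInf.mpr fun K hK => ?_
  exact modRad_le_comap5 φ hK hx

lemma range_le_modRad5 {M N : ModuleCat.{u} R} (φ : M →ₗ[R] N)
    (h : LinearMap.range φ ≤ modRad N) (x : M) : φ x ∈ modRad N :=
  h ⟨x, rfl⟩

lemma bij_of_near_id5 {A : Type u} [Ring A] [Algebra ℂ A] [FiniteDimensional ℂ A]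
    {M : ModuleCat.{u} Aᵐᵒᵖ} (hfin : Module.Finite Aᵐᵒᵖ M)
    (φ : M →ₗ[Aᵐᵒᵖ] M) (h : ∀ x, φ x - x ∈ modRad M) : Function.Bijective φ := by
  haveI := hfin
  have hsurj : Function.Surjective φ := by
    haveI : IsCoatomic (Submodule Aᵐᵒᵖ M) :=
      CompleteLattice.coatomic_of_top_compact
        ((Submodule.fg_iff_compact ⊤).mp (Module.finite_def.mp hfin))
    rw [← LinearMap.range_eq_top]
    by_contra hne
    obtain ⟨K, hK, hle⟩ := (eq_top_or_exists_le_coatom (LinearMap.range φ)).resolve_left hne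
    have hrad : modRad M ≤ K := sInf_le hK
    have htop : (⊤ : Submodule Aᵐᵒᵖ M) ≤ K := by
      intro x _
      have h1 : φ x ∈ K := hle ⟨x, rfl⟩
      have h2 : φ x - x ∈ K := hrad (h x)
      simpa using K.sub_mem h1 h2
    exact hK.1 (top_le_iff.mp htop)
  letI : Module ℂ M := Module.compHom M (algebraMap ℂ Aᵐᵒᵖ)
  haveI : IsScalarTower ℂ Aᵐᵒᵖ M := ⟨fun c a m => by
    show (c • a) • m = algebraMap ℂ Aᵐᵒᵖ c • (a • m)
    rw [Algebra.smul_def, mul_smul]⟩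
  haveI : Module.Finite ℂ Aᵐᵒᵖ := Module.Finite.equiv (MulOpposite.opLinearEquiv ℂ)
  haveI : Module.Finite ℂ M := Module.Finite.trans Aᵐᵒᵖ M
  haveI : IsNoetherian ℂ M := isNoetherian_of_isNoetherianRing_of_finite ℂ M
  haveI : IsNoetherian Aᵐᵒᵖ M := isNoetherian_of_tower ℂ inferInstance
  exact ⟨IsNoetherian.injective_of_surjective_endomorphism φ hsurj, hsurj⟩

-- ### Homotopy calculus

lemma Homotopic.refl {X Y : TwoCx R} (f : X ⟶ Y) : Homotopic f f :=
  ⟨0, 0, by simp, by simp⟩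

lemma Homotopic.symm {X Y : TwoCx R} {f g : X ⟶ Y} (h : Homotopic f g) : Homotopic g f := by
  obtain ⟨h1, h0, e1, e0⟩ := h
  refine ⟨-h1, -h0, ?_, ?_⟩
  · rw [← neg_sub (TwoHom.f1 f), e1]; simp only [neg_add, Preadditive.neg_comp, Preadditive.comp_neg]
  · rw [← neg_sub (TwoHom.f0 f), e0]; simp only [neg_add, Preadditive.neg_comp, Preadditive.comp_neg]

lemma Homotopic.trans {X Y : TwoCx R} {f g k : X ⟶ Y}
    (h : Homotopic f g) (h' : Homotopic g k) : Homotopic f k := by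
  obtain ⟨h1, h0, e1, e0⟩ := h
  obtain ⟨h1', h0', e1', e0'⟩ := h'
  refine ⟨h1 + h1', h0 + h0', ?_, ?_⟩
  · rw [← sub_add_sub_cancel _ (TwoHom.f1 g), e1, e1']
    simp only [Preadditive.add_comp, Preadditive.comp_add]
    abel
  · rw [← sub_add_sub_cancel _ (TwoHom.f0 g), e0, e0']
    simp only [Preadditive.add_comp, Preadditive.comp_add]
    abel

lemma Homotopic.compRight {X Y Z : TwoCx R} {f g : X ⟶ Y} (h : Homotopic f g) (c : Y ⟶ Z) :
    Homotopic (f ≫ c) (g ≫ c) := by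
  obtain ⟨h1, h0, e1, e0⟩ := h
  refine ⟨h1 ≫ c.f0, h0 ≫ c.f1, ?_, ?_⟩
  · rw [comp_f1, comp_f1, ← Preadditive.sub_comp, e1, Preadditive.add_comp,
      Category.assoc, Category.assoc, c.comm0]
    simp only [Category.assoc]
  · rw [comp_f0, comp_f0, ← Preadditive.sub_comp, e0, Preadditive.add_comp,
      Category.assoc, Category.assoc, c.comm1]
    simp only [Category.assoc]

lemma Homotopic.compLeft {W X Y : TwoCx R} {f g : X ⟶ Y} (h : Homotopic f g) (c : W ⟶ X) :
    Homotopic (c ≫ f) (c ≫ g) := by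
  obtain ⟨h1, h0, e1, e0⟩ := h
  refine ⟨c.f1 ≫ h1, c.f0 ≫ h0, ?_, ?_⟩
  · rw [comp_f1, comp_f1, ← Preadditive.comp_sub, e1, Preadditive.comp_add,
      ← Category.assoc, ← Category.assoc (TwoHom.f1 c), ← c.comm1]
    simp only [Category.assoc]
  · rw [comp_f0, comp_f0, ← Preadditive.comp_sub, e0, Preadditive.comp_add,
      ← Category.assoc, ← Category.assoc (TwoHom.f0 c), ← c.comm0]
    simp only [Category.assoc]

lemma HtpEquiv.refl (X : TwoCx R) : HtpEquiv X X :=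
  ⟨𝟙 X, 𝟙 X, by rw [Category.id_comp]; exact Homotopic.refl _,
    by rw [Category.id_comp]; exact Homotopic.refl _⟩

lemma HtpEquiv.symm {X Y : TwoCx R} (h : HtpEquiv X Y) : HtpEquiv Y X := by
  obtain ⟨f, g, h1, h2⟩ := h
  exact ⟨g, f, h2, h1⟩

lemma HtpEquiv.trans {X Y Z : TwoCx R} (h : HtpEquiv X Y) (h' : HtpEquiv Y Z) :
    HtpEquiv X Z := by
  obtain ⟨f, g, hfg, hgf⟩ := h
  obtain ⟨f', g', hfg', hgf'⟩ := h'
  refine ⟨f ≫ f', g' ≫ g, ?_, ?_⟩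
  · have step1 : Homotopic (f ≫ (f' ≫ g') ≫ g) (f ≫ 𝟙 Y ≫ g) :=
      (hfg'.compRight g).compLeft f
    have heq : (f ≫ f') ≫ g' ≫ g = f ≫ (f' ≫ g') ≫ g := by
      simp only [Category.assoc]
    rw [heq]
    refine step1.trans ?_
    rw [Category.id_comp]
    exact hfg
  · have step1 : Homotopic (g' ≫ (g ≫ f) ≫ f') (g' ≫ 𝟙 Y ≫ f') :=
      (hgf.compRight f').compLeft g'
    have heq : (g' ≫ g) ≫ f ≫ f' = g' ≫ (g ≫ f) ≫ f' := by
      simp only [Category.assoc]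
    rw [heq]
    refine step1.trans ?_
    rw [Category.id_comp]
    exact hgf'

lemma htpEquiv_of_iso {X Y : TwoCx R} (e : X ≅ Y) : HtpEquiv X Y :=
  ⟨e.hom, e.inv, by rw [e.hom_inv_id]; exact Homotopic.refl _,
    by rw [e.inv_hom_id]; exact Homotopic.refl _⟩

-- ### Contractible summands

def dsumProj (Z C : TwoCx R) : dsum Z C ⟶ Z where
  f1 := ModuleCat.ofHom (LinearMap.fst R Z.X1 C.X1)
  f0 := ModuleCat.ofHom (LinearMap.fst R Z.X0 C.X0)
  comm1 := ModuleCat.hom_ext (LinearMap.ext fun _ => rfl)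
  comm0 := ModuleCat.hom_ext (LinearMap.ext fun _ => rfl)

def dsumIncl (Z C : TwoCx R) : Z ⟶ dsum Z C where
  f1 := ModuleCat.ofHom (LinearMap.inl R Z.X1 C.X1)
  f0 := ModuleCat.ofHom (LinearMap.inl R Z.X0 C.X0)
  comm1 := ModuleCat.hom_ext <| LinearMap.ext fun z => by
    refine Prod.ext rfl ?_
    show (0 : C.X0) = C.d1 0
    simp
  comm0 := ModuleCat.hom_ext <| LinearMap.ext fun z => by
    refine Prod.ext rfl ?_
    show (0 : C.X1) = C.d0 0
    simp

lemma htpEquiv_dsum_contr (Z C : TwoCx R) (hC : Contractible C) :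
    HtpEquiv (dsum Z C) Z := by
  obtain ⟨h1, h0, e1, e0⟩ := hC
  simp only [id_f1, id_f0, zero_f1, zero_f0, sub_zero] at e1 e0
  refine ⟨dsumProj Z C, dsumIncl Z C, ?_, ?_⟩
  · refine Homotopic.symm ⟨ModuleCat.ofHom (LinearMap.prodMap 0 h1.hom), ModuleCat.ofHom (LinearMap.prodMap 0 h0.hom), ?_, ?_⟩
    · refine ModuleCat.hom_ext (LinearMap.ext fun p => ?_)
      have hc : p.2 = C.d0 (h1 p.2) + h0 (C.d1 p.2) := DFunLike.congr_fun (congrArg ModuleCat.Hom.hom e1) p.2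
      refine Prod.ext ?_ ?_
      · show p.1 - p.1 = Z.d0 0 + (0 : Z.X0 →ₗ[R] Z.X1) (Z.d1 p.1)
        simp
      · show p.2 - 0 = C.d0 (h1 p.2) + h0 (C.d1 p.2)
        rw [sub_zero]; exact hc
    · refine ModuleCat.hom_ext (LinearMap.ext fun p => ?_)
      have hc : p.2 = C.d1 (h0 p.2) + h1 (C.d0 p.2) := DFunLike.congr_fun (congrArg ModuleCat.Hom.hom e0) p.2
      refine Prod.ext ?_ ?_
      · show p.1 - p.1 = Z.d1 0 + (0 : Z.X1 →ₗ[R] Z.X0) (Z.d0 p.1)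
        simp
      · show p.2 - 0 = C.d1 (h0 p.2) + h1 (C.d0 p.2)
        rw [sub_zero]; exact hc
  · have heq : dsumIncl Z C ≫ dsumProj Z C = 𝟙 Z := by
      refine hom_ext ?_ ?_
      · exact ModuleCat.hom_ext (LinearMap.ext fun z => rfl)
      · exact ModuleCat.hom_ext (LinearMap.ext fun z => rfl)
    rw [heq]
    exact Homotopic.refl _

end Aux5

section RadIso

variable {A : Type u} [Ring A] [Algebra ℂ A] [FiniteDimensional ℂ A]

lemma rad_iso_of_htpEquiv {X Y : TwoCx Aᵐᵒᵖ} (hX : RadicalCx X) (hY : RadicalCx Y)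
    (h : HtpEquiv X Y) : Nonempty (X ≅ Y) := by
  obtain ⟨f, g, hfg, hgf⟩ := h
  -- the compositions are bijective in each degree
  have key : ∀ (Z : TwoCx Aᵐᵒᵖ) (hZ : RadicalCx Z) (φ : Z ⟶ Z),
      Homotopic φ (𝟙 Z) → Function.Bijective (TwoHom.f1 φ) ∧ Function.Bijective (TwoHom.f0 φ) := by
    intro Z hZ φ hφ
    obtain ⟨h1, h0, e1, e0⟩ := hφ
    simp only [id_f1, id_f0] at e1 e0
    constructor
    · refine bij_of_near_id5 Z.fin1 (TwoHom.f1 φ).hom fun x => ?_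
      have hx : (TwoHom.f1 φ).hom x - x = Z.d0.hom (h1.hom x) + h0.hom (Z.d1.hom x) := by
        have := DFunLike.congr_fun (congrArg ModuleCat.Hom.hom e1) x
        simpa using this
      rw [hx]
      exact (modRad Z.X1).add_mem (hZ.2 ⟨h1.hom x, rfl⟩) (mem_modRad_map5 h0.hom (hZ.1 ⟨x, rfl⟩))
    · refine bij_of_near_id5 Z.fin0 (TwoHom.f0 φ).hom fun x => ?_
      have hx : (TwoHom.f0 φ).hom x - x = Z.d1.hom (h0.hom x) + h1.hom (Z.d0.hom x) := by
        have := DFunLike.congr_fun (congrArg ModuleCat.Hom.hom e0) x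
        simpa using this
      rw [hx]
      exact (modRad Z.X0).add_mem (hZ.1 ⟨h0.hom x, rfl⟩) (mem_modRad_map5 h1.hom (hZ.2 ⟨x, rfl⟩))
  obtain ⟨hb1X, hb0X⟩ := key X hX (f ≫ g) hfg
  obtain ⟨hb1Y, hb0Y⟩ := key Y hY (g ≫ f) hgf
  -- f is bijective in each degree
  have hf1 : Function.Bijective (TwoHom.f1 f) := by
    constructor
    · have : Function.Injective (fun x => TwoHom.f1 g (TwoHom.f1 f x)) := hb1X.1
      exact Function.Injective.of_comp this
    · have : Function.Surjective (fun y => TwoHom.f1 f (TwoHom.f1 g y)) := hb1Y.2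
      exact Function.Surjective.of_comp this
  have hf0 : Function.Bijective (TwoHom.f0 f) := by
    constructor
    · have : Function.Injective (fun x => TwoHom.f0 g (TwoHom.f0 f x)) := hb0X.1
      exact Function.Injective.of_comp this
    · have : Function.Surjective (fun y => TwoHom.f0 f (TwoHom.f0 g y)) := hb0Y.2
      exact Function.Surjective.of_comp this
  -- build the isomorphism
  let e1 := LinearEquiv.ofBijective (TwoHom.f1 f).hom hf1
  let e0 := LinearEquiv.ofBijective (TwoHom.f0 f).hom hf0
  have hcomm1 : ∀ x : X.X1, TwoHom.f0 f (X.d1 x) = Y.d1 (TwoHom.f1 f x) :=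
    fun x => DFunLike.congr_fun (congrArg ModuleCat.Hom.hom f.comm1) x
  have hcomm0 : ∀ x : X.X0, TwoHom.f1 f (X.d0 x) = Y.d0 (TwoHom.f0 f x) :=
    fun x => DFunLike.congr_fun (congrArg ModuleCat.Hom.hom f.comm0) x
  refine ⟨⟨f, ⟨ModuleCat.ofHom e1.symm.toLinearMap, ModuleCat.ofHom e0.symm.toLinearMap, ?_, ?_⟩, ?_, ?_⟩⟩
  · refine ModuleCat.hom_ext (LinearMap.ext fun y => ?_)
    show e0.symm (Y.d1 y) = X.d1 (e1.symm y)
    apply e0.injective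
    rw [e0.apply_symm_apply]
    show Y.d1 y = TwoHom.f0 f (X.d1 (e1.symm y))
    rw [hcomm1 (e1.symm y)]
    show Y.d1 y = Y.d1 (e1 (e1.symm y))
    rw [e1.apply_symm_apply]
  · refine ModuleCat.hom_ext (LinearMap.ext fun y => ?_)
    show e1.symm (Y.d0 y) = X.d0 (e0.symm y)
    apply e1.injective
    rw [e1.apply_symm_apply]
    show Y.d0 y = TwoHom.f1 f (X.d0 (e0.symm y))
    rw [hcomm0 (e0.symm y)]
    show Y.d0 y = Y.d0 (e0 (e0.symm y))
    rw [e0.apply_symm_apply]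
  · refine hom_ext ?_ ?_
    · exact ModuleCat.hom_ext (LinearMap.ext fun x => e1.symm_apply_apply x)
    · exact ModuleCat.hom_ext (LinearMap.ext fun x => e0.symm_apply_apply x)
  · refine hom_ext ?_ ?_
    · exact ModuleCat.hom_ext (LinearMap.ext fun y => e1.apply_symm_apply y)
    · exact ModuleCat.hom_ext (LinearMap.ext fun y => e0.apply_symm_apply y)

end RadIso


/-- If `X ≅ X_r ⊕ X_c` and `Y ≅ Y_r ⊕ Y_c` with radical parts `X_r`, `Y_r`
and contractible parts `X_c`, `Y_c`, then `X ≃ Y` iff `X_r ≅ Y_r` in `C₂(P)`. -/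
theorem statement_5 {A : Type u} [Ring A] [Algebra ℂ A] [FiniteDimensional ℂ A]
    (X Y Xr Xc Yr Yc : TwoCx Aᵐᵒᵖ)
    (hXr : RadicalCx Xr) (hXc : Contractible Xc)
    (hYr : RadicalCx Yr) (hYc : Contractible Yc)
    (hX : Nonempty (X ≅ dsum Xr Xc)) (hY : Nonempty (Y ≅ dsum Yr Yc)) :
    HtpEquiv X Y ↔ Nonempty (Xr ≅ Yr) := by
  constructor
  · intro h
    have hx : HtpEquiv Xr X :=
      ((htpEquiv_dsum_contr Xr Xc hXc).symm).trans (htpEquiv_of_iso hX.some.symm)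
    have hy : HtpEquiv Y Yr :=
      (htpEquiv_of_iso hY.some).trans (htpEquiv_dsum_contr Yr Yc hYc)
    exact rad_iso_of_htpEquiv hXr hYr ((hx.trans h).trans hy)
  · rintro ⟨e⟩
    have hx : HtpEquiv X Xr :=
      (htpEquiv_of_iso hX.some).trans (htpEquiv_dsum_contr Xr Xc hXc)
    have hy : HtpEquiv Yr Y :=
      ((htpEquiv_dsum_contr Yr Yc hYc).symm).trans (htpEquiv_of_iso hY.some.symm)
    exact (hx.trans (htpEquiv_of_iso e)).trans hy
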